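/- arXiv:2407.12648 — 2 statements merged into one kernel-verified Lean document; each statement's English description precedes it below -/
import Mathlib

section
/- For any complex numbers h₀ and g, if |h₀ + g|² ≥ |h₀|², then for all real numbers a, b with b ≥ a ≥ 1, it holds that |h₀ + g|² ≤ |a·h₀ + b·g|². -/
theorem snr_improvement_scaling (h₀ g : ℂ)
    (h : ‖h₀‖ ^ 2 ≤ ‖h₀ + g‖ ^ 2)
    (a b : ℝ) (ha : 1 ≤ a) (hab : a ≤ b) :
    ‖h₀ + g‖ ^ 2 ≤ ‖(a : ℂ) * h₀ + (b : ℂ) * g‖ ^ 2 := by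
  simp only [Complex.sq_norm, Complex.normSq_apply, Complex.add_re, Complex.add_im,
    Complex.mul_re, Complex.mul_im, Complex.ofReal_re, Complex.ofReal_im] at *
  ring_nf at *
  nlinarith [sq_nonneg (h₀.re + g.re), sq_nonneg (h₀.im + g.im), sq_nonneg h₀.re,
    sq_nonneg h₀.im, sq_nonneg g.re, sq_nonneg g.im, mul_le_mul_of_nonneg_left hab (by linarith : (0:ℝ) ≤ a), sq_nonneg (a - 1), sq_nonneg (b - a)]
end

section
/- For any integer K' ≥ 2 and any real α with |α| ≤ π/K', and for each integer k with 1 ≤ k ≤ K'/2 - 1, it holds that cos(2πk/K' + α) ≤ cos(2πk/K' - π/K') and cos(2π(k + K'/2 - 1)/K' + α) ≤ -cos(2πk/K' - π/K'). -/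
open Real

theorem cosine_bucket_bounds (K' : ℕ) (hK' : 2 ≤ K') (α : ℝ)
    (hα : |α| ≤ π / K') (k : ℕ) (hk1 : 1 ≤ k) (hk2 : (k : ℝ) ≤ (K' : ℝ) / 2 - 1) :
    Real.cos (2 * π * k / K' + α) ≤ Real.cos (2 * π * k / K' - π / K') ∧
      Real.cos (2 * π * ((k : ℝ) + (K' : ℝ) / 2 - 1) / K' + α) ≤
        -Real.cos (2 * π * k / K' - π / K') := by
  have hK0 : (0:ℝ) < K' := by
    have : (2:ℝ) ≤ K' := by exact_mod_cast hK'
    linarith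
  set c : ℝ := π / K' with hc_def
  have hc : 0 < c := div_pos pi_pos hK0
  have hα1 : -c ≤ α := (abs_le.mp hα).1
  have hα2 : α ≤ c := (abs_le.mp hα).2
  set θ : ℝ := 2 * π * k / K' with hθ_def
  have hk1' : (1:ℝ) ≤ (k:ℝ) := by exact_mod_cast hk1
  have hθ1 : 2 * c ≤ θ := by
    rw [hθ_def, hc_def, show (2:ℝ) * (π / (K':ℝ)) = 2 * π / (K':ℝ) from by ring,
      div_le_div_iff₀ hK0 hK0]
    nlinarith [pi_pos, mul_le_mul_of_nonneg_right hk1' (by positivity : (0:ℝ) ≤ 2 * π * (K':ℝ))]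
  have hθ2 : θ ≤ π - 2 * c := by
    rw [hθ_def, hc_def,
      show π - (2:ℝ) * (π / (K':ℝ)) = (π * (K':ℝ) - 2 * π) / (K':ℝ) from by
        field_simp,
      div_le_div_iff₀ hK0 hK0]
    nlinarith [pi_pos, mul_le_mul_of_nonneg_left hk2 (le_of_lt (mul_pos pi_pos hK0))]
  constructor
  · apply Real.cos_le_cos_of_nonneg_of_le_pi (by linarith) (by linarith) (by linarith)
  · have heq : 2 * π * ((k : ℝ) + (K' : ℝ) / 2 - 1) / K' + α
        = (θ - 2 * c + α) + π := by
      rw [hθ_def, hc_def]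
      field_simp
      ring
    rw [heq, Real.cos_add_pi, neg_le_neg_iff]
    have hcosabs : Real.cos (θ - 2 * c + α) = Real.cos |θ - 2 * c + α| := by
      rw [Real.cos_abs]
    rw [hcosabs]
    apply Real.cos_le_cos_of_nonneg_of_le_pi (abs_nonneg _) (by linarith)
    rw [abs_le]
    constructor <;> linarith
end
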